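/- Let n > 1 be an integer and let A be an integer with 2^(n-1) < A < 2^n. Then 2^(n-1)/A + 2^(-(n+1)) is not representable as a precision-(n+1) floating-point number: there do not exist integers C and e with 2^n ≤ C < 2^(n+1) such that 2^(n-1)/A + 2^(-(n+1)) = (C / 2^n) · 2^e. Equivalently, the exact reciprocal of a precision-n floating-point number in (1,2) that is not a power of two is never at the midpoint between two consecutive precision-n floating-point numbers. -/

import Mathlib

/-- For `2^(n-1) < A < 2^n`, the value `2^(n-1)/A + 2^(-(n+1))` is not representable
as a precision-`(n+1)` floating-point number `(C / 2^n) · 2^e` with `2^n ≤ C < 2^(n+1)`: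
the reciprocal of a precision-`n` floating-point number in `(1,2)` that is not a power
of two is never at the midpoint between two consecutive precision-`n` numbers. -/
theorem reciprocal_not_midpoint (n : ℕ) (hn : 1 < n) (A : ℤ)
    (hA1 : 2 ^ (n - 1) < A) (hA2 : A < 2 ^ n) :
    ¬ ∃ (C e : ℤ), 2 ^ n ≤ C ∧ C < 2 ^ (n + 1) ∧
      (2 : ℝ) ^ (n - 1) / (A : ℝ) + (2 : ℝ) ^ (-((n : ℤ) + 1))
        = ((C : ℝ) / 2 ^ n) * (2 : ℝ) ^ e := by
  rintro ⟨C, e, hC1, hC2, hx⟩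
  have hApos : (0:ℤ) < A := lt_trans (by positivity) hA1
  have hAr : (0:ℝ) < A := by exact_mod_cast hApos
  have ht : (2:ℝ) ^ (-((n:ℤ)+1)) = ((2:ℝ)^(n+1))⁻¹ := by
    rw [show -((n:ℤ)+1) = -((n+1:ℕ):ℤ) by push_cast; ring, zpow_neg, zpow_natCast]
  have hpow : ((2:ℝ)^(n-1)) * 2^(n+1) = 2^(2*n) := by
    rw [← pow_add]; congr 1; omega
  have hA1i : ((2:ℝ)^(n-1) + 1) ≤ A := by
    have : (2:ℤ)^(n-1) + 1 ≤ A := hA1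
    exact_mod_cast this
  have hA2r : (A:ℝ) < 2^n := by exact_mod_cast hA2
  have hx1 : (2:ℝ) ^ (n - 1) / (A : ℝ) + (2 : ℝ) ^ (-((n : ℤ) + 1)) < 1 := by
    rw [ht, inv_eq_one_div, div_add_div _ _ hAr.ne' (by positivity),
      div_lt_one (by positivity)]
    have hmul := mul_le_mul_of_nonneg_right hA1i (le_of_lt (pow_pos (two_pos (α := ℝ)) (n+1)))
    rw [add_mul, hpow, one_mul] at hmul
    have hs : (2:ℝ)^(n+1) = 2^n * 2 := pow_succ 2 n
    nlinarith [hmul, hpow]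
  have hx0 : (1/2 : ℝ) < (2:ℝ) ^ (n - 1) / (A : ℝ) + (2 : ℝ) ^ (-((n : ℤ) + 1)) := by
    have h1 : (1/2:ℝ) < 2^(n-1)/A := by
      rw [div_lt_div_iff₀ two_pos hAr]
      have : (2:ℝ)^(n-1) * 2 = 2^n := by
        rw [← pow_succ]; congr 1; omega
      nlinarith
    have h2 : (0:ℝ) < (2:ℝ) ^ (-((n:ℤ)+1)) := by rw [ht]; positivity
    linarith
  have h2e : (0:ℝ) < (2:ℝ)^e := zpow_pos two_pos e
  have hCr1 : (1:ℝ) ≤ (C:ℝ)/2^n := by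
    rw [le_div_iff₀ (by positivity)]
    have : ((2:ℤ)^n : ℝ) ≤ (C:ℝ) := by exact_mod_cast hC1
    push_cast at this; linarith
  have hCr2 : (C:ℝ)/2^n < 2 := by
    rw [div_lt_iff₀ (by positivity)]
    have : (C:ℝ) < ((2:ℤ)^(n+1) : ℝ) := by exact_mod_cast hC2
    push_cast at this
    calc (C:ℝ) < 2^(n+1) := this
      _ = 2 * 2^n := by ring
  have he : e = -1 := by
    by_contra he
    rcases lt_or_ge e (-1) with h | h
    · -- e ≤ -2 : then x < 2*2^e ≤ 2^(-1) = 1/2, contradiction with hx0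
      have : (2:ℝ)^(e+1) ≤ (2:ℝ)^(-1:ℤ) := by
        apply zpow_le_zpow_right₀ (by norm_num) (by omega)
      have h2 : (2:ℝ)^(e+1) = 2 * 2^e := by
        rw [zpow_add₀ (two_ne_zero), zpow_one]; ring
      have hxe : (2 : ℝ) ^ (n - 1) / (A : ℝ) + (2 : ℝ) ^ (-((n : ℤ) + 1)) < 2 * 2^e := by
        rw [hx]; nlinarith
      simp [zpow_neg] at this
      nlinarith
    · -- e ≥ 0 : then x ≥ 2^e ≥ 1, contradiction with hx1
      have he0 : (0:ℤ) ≤ e := by omega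
      have : (1:ℝ) ≤ (2:ℝ)^e := by
        have := zpow_le_zpow_right₀ (by norm_num : (1:ℝ) ≤ 2) he0
        simpa using this
      have hxe : (2:ℝ)^e ≤ (2 : ℝ) ^ (n - 1) / (A : ℝ) + (2 : ℝ) ^ (-((n : ℤ) + 1)) := by
        rw [hx]; nlinarith
      linarith
  subst he
  -- clear denominators
  have key : (2:ℝ)^(2*n) + A = C * A := by
    rw [ht] at hx
    have h1 : (2:ℝ)^(-1:ℤ) = (2:ℝ)⁻¹ := by norm_num
    rw [h1] at hx
    have hne : (A:ℝ) ≠ 0 := hAr.ne'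
    field_simp at hx
    rw [hpow] at hx
    have h2 : ((2:ℝ)^n * 2) ≠ 0 := by positivity
    apply mul_right_cancel₀ h2
    rw [← mul_assoc, hx]; ring
  have keyZ : (2:ℤ)^(2*n) + A = C * A := by exact_mod_cast key
  have hdvd : A ∣ (2:ℤ)^(2*n) := ⟨C - 1, by linarith [keyZ]⟩
  have hdvdN : A.natAbs ∣ 2^(2*n) := by
    have h := Int.natAbs_dvd_natAbs.mpr hdvd
    norm_num [Int.natAbs_pow] at h
    exact h
  obtain ⟨k, hk, hkeq⟩ := (Nat.dvd_prime_pow Nat.prime_two).mp hdvdN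
  have hAeq : A = 2^k := by
    rw [← Int.natAbs_of_nonneg hApos.le, hkeq]; push_cast; ring
  rw [hAeq] at hA1 hA2
  have h1 : n - 1 < k := by
    by_contra h
    exact absurd hA1 (not_lt.mpr (pow_le_pow_right₀ (by norm_num) (by omega)))
  have h2 : k < n := by
    by_contra h
    exact absurd hA2 (not_lt.mpr (pow_le_pow_right₀ (by norm_num) (by omega)))
  omega
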